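/- Let p be an odd prime, let n ≥ 1 and ℓ be integers with n/2 ≤ ℓ ≤ n, and let f : ZMod p^n → ZMod p^n be a function such that for all x and t, f(x + t·p^ℓ) = f(x) + f'(x)·t·p^ℓ in ZMod p^n, where f' : ZMod p^n → ZMod p^n. Then the complete exponential sum over units x mod p^n of e(f(x)/p^n) equals the sum of e(f(x₀)/p^n) over those units x₀ mod p^n with f'(x₀) ≡ 0 mod p^{n-ℓ}. -/

import Mathlib

open Finset

theorem stationary_phase_reduction
    (p n ℓ : ℕ) (hp : p.Prime) (hodd : Odd p) (hn : 1 ≤ n)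
    (hl1 : n ≤ 2 * ℓ) (hl2 : ℓ ≤ n) [NeZero (p ^ n)]
    (f f' : ZMod (p ^ n) → ZMod (p ^ n))
    (hT : ∀ x t : ZMod (p ^ n),
      f (x + t * (p : ZMod (p ^ n)) ^ ℓ) = f x + f' x * t * (p : ZMod (p ^ n)) ^ ℓ) :
    ∑ x : (ZMod (p ^ n))ˣ,
        Complex.exp (2 * Real.pi * Complex.I * ((f x).val : ℂ) / ((p : ℂ) ^ n)) =
    ∑ x ∈ Finset.univ.filter (fun x : (ZMod (p ^ n))ˣ => p ^ (n - ℓ) ∣ (f' x).val),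
        Complex.exp (2 * Real.pi * Complex.I * ((f x).val : ℂ) / ((p : ℂ) ^ n)) := by
  classical
  have hℓ1 : 1 ≤ ℓ := by omega
  haveI : NeZero (p ^ (n - ℓ)) := ⟨pow_ne_zero _ hp.pos.ne'⟩
  have hpq : p ∣ p ^ n := dvd_pow_self p (by omega)
  set ψ : AddChar (ZMod (p ^ n)) ℂ := ZMod.stdAddChar with hψdef
  have hψ : ∀ a : ZMod (p ^ n),
      Complex.exp (2 * Real.pi * Complex.I * (a.val : ℂ) / ((p : ℂ) ^ n)) = ψ a := by
    intro a
    rw [hψdef, ZMod.stdAddChar_apply, ZMod.toCircle_apply]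
    norm_cast
  have hψ0 : ∀ a : ZMod (p ^ n), ψ a = 1 → a = 0 := by
    intro a ha
    have h1 : ZMod.toCircle a = 1 := by
      rw [← Circle.coe_eq_one]
      exact_mod_cast ha
    have h2 : ZMod.toCircle a = ZMod.toCircle (0 : ZMod (p ^ n)) := by
      rw [h1, AddChar.map_zero_eq_one]
    exact ZMod.injective_toCircle h2
  -- N • c = 0
  have hNc : (p : ZMod (p ^ n)) ^ (n - ℓ) * (p : ZMod (p ^ n)) ^ ℓ = 0 := by
    have h : ((p ^ (n - ℓ) * p ^ ℓ : ℕ) : ZMod (p ^ n)) = 0 := by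
      rw [← pow_add]
      have h' : n - ℓ + ℓ = n := by omega
      rw [h']
      exact ZMod.natCast_self _
    push_cast at h
    exact h
  -- units iff not p dvd val
  have unit_iff : ∀ x : ZMod (p ^ n), IsUnit x ↔ ¬ p ∣ x.val := by
    intro x
    conv_lhs => rw [← ZMod.natCast_zmod_val x]
    rw [ZMod.isUnit_iff_coprime, Nat.coprime_pow_right_iff (by omega),
      Nat.coprime_comm, hp.coprime_iff_not_dvd]
  have unit_add : ∀ (a x : ZMod (p ^ n)), p ∣ a.val → (IsUnit (x + a) ↔ IsUnit x) := by
    intro a x ha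
    rw [unit_iff, unit_iff, ZMod.val_add, Nat.dvd_mod_iff hpq, Nat.add_comm,
      Nat.dvd_add_right ha]
  have pdvd : ∀ t : ZMod (p ^ (n - ℓ)),
      p ∣ ((t.val : ZMod (p ^ n)) * (p : ZMod (p ^ n)) ^ ℓ).val := by
    intro t
    have h : ((t.val : ZMod (p ^ n)) * (p : ZMod (p ^ n)) ^ ℓ)
        = ((t.val * p ^ ℓ : ℕ) : ZMod (p ^ n)) := by push_cast; ring
    rw [h, ZMod.val_natCast, Nat.dvd_mod_iff hpq]
    exact Dvd.dvd.mul_left (dvd_pow_self p (by omega)) t.val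
  -- b * c = 0 iff N ∣ b.val
  have bc_zero : ∀ b : ZMod (p ^ n),
      b * (p : ZMod (p ^ n)) ^ ℓ = 0 ↔ p ^ (n - ℓ) ∣ b.val := by
    intro b
    have hb : b * (p : ZMod (p ^ n)) ^ ℓ = ((b.val * p ^ ℓ : ℕ) : ZMod (p ^ n)) := by
      conv_lhs => rw [← ZMod.natCast_zmod_val b]
      push_cast; ring
    rw [hb, ZMod.natCast_eq_zero_iff]
    have hqNP : p ^ n = p ^ (n - ℓ) * p ^ ℓ := by rw [← pow_add]; congr 1; omega
    obtain ⟨v, hv⟩ : ∃ v, b.val = v := ⟨_, rfl⟩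
    rw [hv, hqNP]
    exact Nat.mul_dvd_mul_iff_right (pow_pos hp.pos ℓ)
  -- character sum
  have hchar : ∀ b : ZMod (p ^ n),
      ∑ t : ZMod (p ^ (n - ℓ)), ψ (b * (t.val : ZMod (p ^ n)) * (p : ZMod (p ^ n)) ^ ℓ)
      = if p ^ (n - ℓ) ∣ b.val then ((p ^ (n - ℓ) : ℕ) : ℂ) else 0 := by
    intro b
    by_cases hN1 : p ^ (n - ℓ) = 1
    · have hln : ℓ = n := by
        by_contra hcon
        have : 1 < p ^ (n - ℓ) := Nat.one_lt_pow (by omega) hp.one_lt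
        omega
      have hc0 : (p : ZMod (p ^ n)) ^ ℓ = 0 := by
        rw [hln]
        have : ((p ^ n : ℕ) : ZMod (p ^ n)) = 0 := ZMod.natCast_self _
        push_cast at this
        exact this
      rw [if_pos (hN1 ▸ Nat.one_dvd _)]
      simp only [hc0, mul_zero, AddChar.map_zero_eq_one]
      rw [Finset.sum_const, Finset.card_univ, ZMod.card, hN1]
      simp
    · haveI : Fact (1 < p ^ (n - ℓ)) :=
        ⟨lt_of_le_of_ne (Nat.one_le_iff_ne_zero.mpr (NeZero.ne _)) (Ne.symm hN1)⟩
      have hsm : ((p ^ (n - ℓ) : ℕ) : ℤ) • (b * (p : ZMod (p ^ n)) ^ ℓ) = 0 := by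
        rw [zsmul_eq_mul]
        push_cast
        rw [show ((p : ZMod (p ^ n)) ^ (n - ℓ)) * (b * (p : ZMod (p ^ n)) ^ ℓ)
            = b * ((p : ZMod (p ^ n)) ^ (n - ℓ) * (p : ZMod (p ^ n)) ^ ℓ) from by ring,
          hNc, mul_zero]
      set g : ZMod (p ^ (n - ℓ)) →+ ZMod (p ^ n) :=
        ZMod.lift _ ⟨zmultiplesHom _ (b * (p : ZMod (p ^ n)) ^ ℓ), hsm⟩ with hg
      have hgval : ∀ t : ZMod (p ^ (n - ℓ)),
          g t = (t.val : ZMod (p ^ n)) * (b * (p : ZMod (p ^ n)) ^ ℓ) := by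
        intro t
        have ht : ((t.val : ℤ) : ZMod (p ^ (n - ℓ))) = t := by
          push_cast [ZMod.natCast_zmod_val]
          rfl
        conv_lhs => rw [← ht]
        rw [hg, ZMod.lift_coe]
        simp only [zmultiplesHom_apply, zsmul_eq_mul]
        push_cast
        ring
      set Ψ : AddChar (ZMod (p ^ (n - ℓ))) ℂ := ψ.compAddMonoidHom g with hΨ
      have hΨval : ∀ t : ZMod (p ^ (n - ℓ)),
          Ψ t = ψ (b * (t.val : ZMod (p ^ n)) * (p : ZMod (p ^ n)) ^ ℓ) := by
        intro t
        rw [hΨ, AddChar.compAddMonoidHom_apply, hgval]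
        congr 1; ring
      rw [← Finset.sum_congr rfl (fun t _ => (hΨval t))]
      by_cases hbc : b * (p : ZMod (p ^ n)) ^ ℓ = 0
      · rw [if_pos ((bc_zero b).mp hbc)]
        have hone : Ψ = 1 := by
          ext t
          rw [hΨval, show b * (t.val : ZMod (p ^ n)) * (p : ZMod (p ^ n)) ^ ℓ
              = (t.val : ZMod (p ^ n)) * (b * (p : ZMod (p ^ n)) ^ ℓ) by ring, hbc,
            mul_zero, AddChar.map_zero_eq_one, AddChar.one_apply]
        rw [AddChar.sum_eq_card_of_eq_one hone, ZMod.card]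
      · rw [if_neg (fun h => hbc ((bc_zero b).mpr h))]
        have hne : Ψ ≠ 1 := by
          intro h
          apply hbc
          have h1 : Ψ 1 = 1 := by rw [h]; rfl
          rw [hΨ, AddChar.compAddMonoidHom_apply, hgval, ZMod.val_one] at h1
          have := hψ0 _ h1
          rwa [Nat.cast_one, one_mul] at this
        exact AddChar.sum_eq_zero_of_ne_one hne
  -- sums over units as sums over filtered ZMod q
  have units_sum : ∀ (P : ZMod (p ^ n) → Prop) [DecidablePred P] (F : ZMod (p ^ n) → ℂ),
      ∑ u ∈ Finset.univ.filter (fun u : (ZMod (p ^ n))ˣ => P ↑u), F ↑u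
        = ∑ x ∈ Finset.univ.filter (fun x : ZMod (p ^ n) => IsUnit x ∧ P x), F x := by
    intro P _ F
    refine Finset.sum_bij (fun u _ => (u : ZMod (p ^ n))) ?_ ?_ ?_ ?_
    · intro u hu
      simp only [mem_filter, mem_univ, true_and] at hu ⊢
      exact ⟨u.isUnit, hu⟩
    · intro a _ b _ h
      exact Units.ext h
    · intro x hx
      simp only [mem_filter, mem_univ, true_and] at hx
      refine ⟨hx.1.unit, ?_, hx.1.unit_spec⟩
      simp only [mem_filter, mem_univ, true_and]
      rw [hx.1.unit_spec]
      exact hx.2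
    · intros; rfl
  -- rewrite goal
  simp only [hψ]
  have lhs_eq : ∑ x : (ZMod (p ^ n))ˣ, ψ (f ↑x)
      = ∑ x ∈ Finset.univ.filter (fun x : ZMod (p ^ n) => IsUnit x ∧ True),
          (fun y => ψ (f y)) x := by
    rw [← units_sum (fun _ => True) (fun y => ψ (f y))]
    simp
  have rhs_eq : ∑ x ∈ Finset.univ.filter
        (fun x : (ZMod (p ^ n))ˣ => p ^ (n - ℓ) ∣ (f' ↑x).val), ψ (f ↑x)
      = ∑ x ∈ Finset.univ.filter
          (fun x : ZMod (p ^ n) => IsUnit x ∧ p ^ (n - ℓ) ∣ (f' x).val),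
          (fun y => ψ (f y)) x :=
    units_sum (fun x => p ^ (n - ℓ) ∣ (f' x).val) (fun y => ψ (f y))
  rw [lhs_eq, rhs_eq]
  simp only [and_true]
  have hfilter : Finset.univ.filter
        (fun x : ZMod (p ^ n) => IsUnit x ∧ p ^ (n - ℓ) ∣ (f' x).val)
      = (Finset.univ.filter (fun x : ZMod (p ^ n) => IsUnit x)).filter
          (fun x => p ^ (n - ℓ) ∣ (f' x).val) := by
    rw [Finset.filter_filter]
  rw [hfilter]
  set s : Finset (ZMod (p ^ n)) := Finset.univ.filter (fun x : ZMod (p ^ n) => IsUnit x) with hs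
  have hNC : (((p ^ (n - ℓ) : ℕ)) : ℂ) ≠ 0 := Nat.cast_ne_zero.mpr (NeZero.ne _)
  apply mul_left_cancel₀ hNC
  have key : ∀ t : ZMod (p ^ (n - ℓ)),
      ∑ x ∈ s, ψ (f (x + (t.val : ZMod (p ^ n)) * (p : ZMod (p ^ n)) ^ ℓ))
        = ∑ x ∈ s, ψ (f x) := by
    intro t
    set a : ZMod (p ^ n) := (t.val : ZMod (p ^ n)) * (p : ZMod (p ^ n)) ^ ℓ with ha
    refine Finset.sum_bij' (fun x _ => x + a) (fun y _ => y - a) ?_ ?_ ?_ ?_ ?_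
    · intro x hx
      simp only [hs, mem_filter, mem_univ, true_and] at hx ⊢
      exact (unit_add a x (pdvd t)).mpr hx
    · intro y hy
      simp only [hs, mem_filter, mem_univ, true_and] at hy ⊢
      have h2 := unit_add a (y - a) (pdvd t)
      rw [show y - a + a = y from by ring] at h2
      exact h2.mp hy
    · intro x _
      exact by ring
    · intro y _
      exact by ring
    · intros; rfl
  have step1 : (((p ^ (n - ℓ) : ℕ)) : ℂ) * ∑ x ∈ s, ψ (f x)
      = ∑ t : ZMod (p ^ (n - ℓ)), ∑ x ∈ s,
          ψ (f (x + (t.val : ZMod (p ^ n)) * (p : ZMod (p ^ n)) ^ ℓ)) := by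
    rw [Finset.sum_congr rfl (fun t (_ : t ∈ Finset.univ) => key t),
      Finset.sum_const, Finset.card_univ, ZMod.card, nsmul_eq_mul]
  rw [step1, Finset.sum_comm]
  have step2 : ∀ x ∈ s, ∑ t : ZMod (p ^ (n - ℓ)),
      ψ (f (x + (t.val : ZMod (p ^ n)) * (p : ZMod (p ^ n)) ^ ℓ))
      = ψ (f x) * (if p ^ (n - ℓ) ∣ (f' x).val then (((p ^ (n - ℓ) : ℕ)) : ℂ) else 0) := by
    intro x _
    have h : ∀ t : ZMod (p ^ (n - ℓ)),
        ψ (f (x + (t.val : ZMod (p ^ n)) * (p : ZMod (p ^ n)) ^ ℓ))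
        = ψ (f x) * ψ (f' x * (t.val : ZMod (p ^ n)) * (p : ZMod (p ^ n)) ^ ℓ) := by
      intro t
      rw [hT x ((t.val : ZMod (p ^ n))), AddChar.map_add_eq_mul]
    rw [Finset.sum_congr rfl (fun t _ => h t), ← Finset.mul_sum, hchar (f' x)]
  rw [Finset.sum_congr rfl step2]
  conv_rhs => rw [Finset.mul_sum, Finset.sum_filter]
  refine Finset.sum_congr rfl fun x hx => ?_
  by_cases h : p ^ (n - ℓ) ∣ (f' x).val
  · rw [if_pos h, if_pos h, mul_comm]
  · rw [if_neg h, if_neg h, mul_zero]
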